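/- Let ρ ≥ 3/2. Then the function f(ρ) = (ρ-1)·ln(ρ/(ρ-1)) + 2ρ - 3 + 2(ρ-1)·ln(ρ/(2(ρ-1))) is strictly increasing in ρ on [3/2, 2], f(3/2) < 1, and f(1.53) > 1. Hence the equation f(ρ) = 1 has a unique solution in (3/2, 1.53). -/

import Mathlib

open Real Set

theorem stmt7 (f : ℝ → ℝ)
    (hf : ∀ ρ, f ρ = (ρ - 1) * Real.log (ρ / (ρ - 1)) + 2 * ρ - 3
          + 2 * (ρ - 1) * Real.log (ρ / (2 * (ρ - 1)))) :
    StrictMonoOn f (Set.Icc (3/2 : ℝ) 2) ∧ f (3/2) < 1 ∧ 1 < f 1.53 ∧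
    ∃! ρ : ℝ, ρ ∈ Set.Ioo (3/2 : ℝ) 1.53 ∧ f ρ = 1 := by
  -- f equals a nicer form for ρ > 1
  have h1 : ∀ x : ℝ, 1 < x → f x = 3*(x-1)*Real.log x - 3*(x-1)*Real.log (x-1)
      - 2*(x-1)*Real.log 2 + 2*x - 3 := by
    intro x hx
    have hx0 : x ≠ 0 := by linarith
    have hx1 : x - 1 ≠ 0 := by intro h; linarith [sub_eq_zero.mp h]
    have h2x1 : 2 * (x - 1) ≠ 0 := by
      intro h; apply hx1; linarith [h]
    rw [hf, Real.log_div hx0 hx1, Real.log_div hx0 h2x1,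
      Real.log_mul two_ne_zero hx1]
    ring
  -- derivative
  have hD : ∀ ρ : ℝ, 1 < ρ → HasDerivAt f
      (3 * Real.log ρ - 3 * Real.log (ρ - 1) - 3/ρ + 2 - 2 * Real.log 2) ρ := by
    intro ρ hρ
    have hρ0 : ρ ≠ 0 := by linarith
    have hρ1 : ρ - 1 ≠ 0 := by intro h; linarith [sub_eq_zero.mp h]
    have hsub : HasDerivAt (fun x : ℝ => x - 1) 1 ρ := (hasDerivAt_id ρ).sub_const 1
    have hlog : HasDerivAt Real.log ρ⁻¹ ρ := Real.hasDerivAt_log hρ0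
    have hlog1 : HasDerivAt (fun x : ℝ => Real.log (x - 1)) ((ρ-1)⁻¹ * 1) ρ :=
      by have := (Real.hasDerivAt_log hρ1).comp ρ hsub; exact this
    have t1 : HasDerivAt (fun x : ℝ => 3*(x-1)*Real.log x)
        ((3*1) * Real.log ρ + (3*(ρ-1)) * ρ⁻¹) ρ := by
      have := (hsub.const_mul (3:ℝ)).mul hlog
      exact this.congr_deriv (by ring)
    have t2 : HasDerivAt (fun x : ℝ => 3*(x-1)*Real.log (x-1))
        ((3*1) * Real.log (ρ-1) + (3*(ρ-1)) * ((ρ-1)⁻¹ * 1)) ρ := by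
      have := (hsub.const_mul (3:ℝ)).mul hlog1
      exact this.congr_deriv (by ring)
    have t3 : HasDerivAt (fun x : ℝ => 2*(x-1)*Real.log 2) (2 * Real.log 2) ρ := by
      have := (hsub.const_mul (2:ℝ)).mul_const (Real.log 2)
      simpa using this
    have t4 : HasDerivAt (fun x : ℝ => 2*x - 3) 2 ρ := by
      simpa using ((hasDerivAt_id ρ).const_mul (2:ℝ)).sub_const 3
    have hg := ((t1.sub t2).sub t3).add t4
    have heq : f =ᶠ[nhds ρ] (fun x : ℝ => ((fun x : ℝ => 3*(x-1)*Real.log x) x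
        - (fun x : ℝ => 3*(x-1)*Real.log (x-1)) x
        - (fun x : ℝ => 2*(x-1)*Real.log 2) x) + (fun x : ℝ => 2*x - 3) x) := by
      filter_upwards [Ioi_mem_nhds hρ] with x hx
      rw [h1 x hx]
      ring
    have hfd := hg.congr_of_eventuallyEq heq
    have e0 : ρ * ρ⁻¹ = 1 := mul_inv_cancel₀ hρ0
    have e1 : (ρ - 1) * (ρ - 1)⁻¹ = 1 := mul_inv_cancel₀ hρ1
    exact hfd.congr_deriv (by linear_combination 3 * e0 - 3 * e1)
  -- continuity on [3/2, 2]
  have hcont : ContinuousOn f (Icc (3/2 : ℝ) 2) := fun x hx =>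
    ((hD x (by linarith [hx.1])).continuousAt).continuousWithinAt
  -- strict monotonicity
  have hmono : StrictMonoOn f (Icc (3/2 : ℝ) 2) := by
    apply strictMonoOn_of_deriv_pos (convex_Icc _ _) hcont
    intro x hx
    rw [interior_Icc] at hx
    obtain ⟨hx1, hx2⟩ := hx
    have hx1' : (1:ℝ) < x := by linarith
    rw [(hD x hx1').deriv]
    have hpos : (0:ℝ) < x - 1 := by linarith
    have hle : Real.log (2*(x-1)) ≤ Real.log x := by
      apply Real.log_le_log (by linarith)
      linarith
    rw [Real.log_mul two_ne_zero (by linarith)] at hle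
    have h3x : 3/x ≤ 2 := by
      rw [div_le_iff₀ (by linarith)]; linarith
    have hl2 : (0:ℝ) < Real.log 2 := Real.log_pos (by norm_num)
    linarith
  -- value at 3/2
  have hexp2 : Real.exp 2 = Real.exp 1 * Real.exp 1 := by
    rw [← Real.exp_add]; norm_num
  have hlog3 : 3 * Real.log 3 < 2 + 2 * Real.log 2 := by
    have h27 : Real.log 27 = 3 * Real.log 3 := by
      rw [show (27:ℝ) = 3^3 by norm_num, Real.log_pow]; push_cast; ring
    have h4 : Real.log 4 = 2 * Real.log 2 := by
      rw [show (4:ℝ) = 2^2 by norm_num, Real.log_pow]; push_cast; ring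
    have hdiv : Real.log (27/4 : ℝ) = Real.log 27 - Real.log 4 :=
      Real.log_div (by norm_num) (by norm_num)
    have hlt : Real.log (27/4 : ℝ) < 2 := by
      have hx : (27/4 : ℝ) < Real.exp 2 := by nlinarith [Real.exp_one_gt_d9]
      calc Real.log (27/4 : ℝ) < Real.log (Real.exp 2) := Real.log_lt_log (by norm_num) hx
        _ = 2 := Real.log_exp 2
    linarith [hdiv ▸ hlt]
  have hA : f (3/2) < 1 := by
    have la : Real.log ((3:ℝ)/2) = Real.log 3 - Real.log 2 :=
      Real.log_div (by norm_num) (by norm_num)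
    have lb : Real.log ((3/2:ℝ) - 1) = -Real.log 2 := by
      rw [show (3/2:ℝ) - 1 = (2:ℝ)⁻¹ by norm_num, Real.log_inv]
    rw [h1 (3/2) (by norm_num), lb, show ((3:ℝ)/2) = (3/2:ℝ) from rfl] at *
    rw [la]
    nlinarith [hlog3]
  -- value at 1.53
  have hB : (1:ℝ) < f 1.53 := by
    set L := Real.log ((153:ℝ)/53) with hL
    have e0 : Real.log (1.53:ℝ) - Real.log (0.53:ℝ) = L := by
      rw [hL, ← Real.log_div (by norm_num) (by norm_num)]
      norm_num
    have hfv : f 1.53 = 1.59 * L - 1.06 * Real.log 2 + 0.06 := by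
      rw [h1 1.53 (by norm_num), show (1.53:ℝ) - 1 = 0.53 by norm_num,
        show Real.log (0.53:ℝ) = Real.log (1.53:ℝ) - L from by linarith [e0]]
      ring
    -- lower bound for L
    have hLsq : 2 * L = 3 * Real.log 2 + Real.log ((23409:ℝ)/22472) := by
      have hsq : ((153:ℝ)/53)^2 = 8 * (23409/22472) := by norm_num
      have c1 : 2 * L = Real.log (((153:ℝ)/53)^2) := by
        rw [Real.log_pow]; push_cast; ring
      rw [c1, hsq, Real.log_mul (by norm_num) (by norm_num),
        show (8:ℝ) = 2^3 by norm_num, Real.log_pow]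
      push_cast; ring
    have hsmall : (937/23409 : ℝ) ≤ Real.log ((23409:ℝ)/22472) := by
      have h := Real.log_le_sub_one_of_pos (show (0:ℝ) < 22472/23409 by norm_num)
      rw [show (22472/23409:ℝ) = ((23409:ℝ)/22472)⁻¹ by norm_num, Real.log_inv] at h
      linarith
    have hl2 := Real.log_two_gt_d9
    rw [hfv]
    linarith
  refine ⟨hmono, hA, hB, ?_⟩
  -- existence via IVT
  have hc153 : ContinuousOn f (Icc (3/2 : ℝ) 1.53) :=
    hcont.mono (Icc_subset_Icc le_rfl (by norm_num))
  have hIVT := intermediate_value_Ioo (show (3/2:ℝ) ≤ 1.53 by norm_num) hc153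
  obtain ⟨ρ, hρmem, hρval⟩ := hIVT ⟨hA, hB⟩
  have hsubset : Ioo (3/2 : ℝ) 1.53 ⊆ Icc (3/2 : ℝ) 2 := fun y hy =>
    ⟨le_of_lt hy.1, by linarith [hy.2]⟩
  refine ⟨ρ, ⟨hρmem, hρval⟩, ?_⟩
  rintro y ⟨hymem, hyval⟩
  exact hmono.injOn (hsubset hymem) (hsubset hρmem) (hyval.trans hρval.symm)
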